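/- arXiv:2110.06198 — 5 statements merged into one kernel-verified Lean document; each statement's English description precedes it below -/
import Mathlib

section
/- Let s ≥ 0 and K ≥ 1 be integers, L ≥ 1 an integer, and x ∈ (0,1]. Define f(x) = x(1-(1-x)^{s+K}) ∏_{j=1}^{L-1} (1 - x/2^j)^K + ∑_{ℓ=1}^{L-1} (x/2^ℓ)(1-(1-x/2^ℓ)^K) ∏_{j=ℓ+1}^{L-1} (1 - x/2^j)^K. Then f(x) ≤ 2(s+K)x². -/
lemma aux_bern (y : ℝ) (hy0 : 0 ≤ y) (hy1 : y ≤ 1) (n : ℕ) :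
    1 - (1 - y) ^ n ≤ n * y := by
  have h : 1 + n * (-y) ≤ (1 + (-y)) ^ n := by
    apply one_add_mul_le_pow
    linarith
  have : (1 + (-y)) = 1 - y := by ring
  rw [this] at h
  linarith

lemma aux_bern_nonneg (y : ℝ) (hy0 : 0 ≤ y) (hy1 : y ≤ 1) (n : ℕ) :
    0 ≤ 1 - (1 - y) ^ n := by
  have h1 : (0:ℝ) ≤ 1 - y := by linarith
  have h2 : (1 - y) ^ n ≤ 1 ^ n := pow_le_pow_left₀ h1 (by linarith) n
  simpa using h2

lemma aux_prod_mem (x : ℝ) (hx0 : 0 < x) (hx1 : x ≤ 1) (K : ℕ) (S : Finset ℕ)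
    (hS : ∀ j ∈ S, 1 ≤ j) :
    0 ≤ (∏ j ∈ S, (1 - x / 2 ^ j) ^ K) ∧ (∏ j ∈ S, (1 - x / 2 ^ j) ^ K) ≤ 1 := by
  have key : ∀ j ∈ S, (0:ℝ) ≤ (1 - x / 2 ^ j) ^ K ∧ (1 - x / 2 ^ j) ^ K ≤ 1 := by
    intro j hj
    have hj1 := hS j hj
    have h2j : (2:ℝ) ≤ 2 ^ j := by
      calc (2:ℝ) = 2 ^ 1 := (pow_one 2).symm
      _ ≤ 2 ^ j := pow_le_pow_right₀ (by norm_num) hj1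
    have hpos : (0:ℝ) < 2 ^ j := by positivity
    have hle : x / 2 ^ j ≤ 1 / 2 := by
      rw [div_le_div_iff₀ hpos (by norm_num)]
      nlinarith
    have hge : 0 ≤ x / 2 ^ j := by positivity
    constructor
    · apply pow_nonneg; linarith
    · exact pow_le_one₀ (by linarith) (by linarith)
  constructor
  · exact Finset.prod_nonneg fun j hj => (key j hj).1
  · exact Finset.prod_le_one (fun j hj => (key j hj).1) (fun j hj => (key j hj).2)

lemma aux_geom (n : ℕ) : ∑ l ∈ Finset.Icc 1 n, ((1:ℝ)/4) ^ l ≤ 1/3 - (1/3) * (1/4) ^ n := by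
  induction n with
  | zero => simp
  | succ n ih =>
    rw [Finset.sum_Icc_succ_top (Nat.one_le_iff_ne_zero.mpr (Nat.succ_ne_zero n))]
    have : ((1:ℝ)/4) ^ (n+1) = (1/4) * (1/4)^n := by ring
    rw [this]
    nlinarith [ih]

theorem stmt_3 (s K L : ℕ) (hK : 1 ≤ K) (hL : 1 ≤ L) (x : ℝ) (hx0 : 0 < x) (hx1 : x ≤ 1) :
    x * (1 - (1 - x) ^ (s + K)) * (∏ j ∈ Finset.Icc 1 (L - 1), (1 - x / 2 ^ j) ^ K)
      + ∑ l ∈ Finset.Icc 1 (L - 1),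
          (x / 2 ^ l) * (1 - (1 - x / 2 ^ l) ^ K) *
            (∏ j ∈ Finset.Icc (l + 1) (L - 1), (1 - x / 2 ^ j) ^ K)
    ≤ 2 * ((s : ℝ) + K) * x ^ 2 := by
  have hprod := aux_prod_mem x hx0 hx1 K (Finset.Icc 1 (L-1)) (fun j hj => (Finset.mem_Icc.mp hj).1)
  -- term 1
  have h1 : x * (1 - (1 - x) ^ (s + K)) * (∏ j ∈ Finset.Icc 1 (L - 1), (1 - x / 2 ^ j) ^ K)
      ≤ ((s:ℝ) + K) * x ^ 2 := by
    have hb := aux_bern x hx0.le hx1 (s + K)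
    have hnn := aux_bern_nonneg x hx0.le hx1 (s + K)
    have h1' : x * (1 - (1 - x) ^ (s + K)) * (∏ j ∈ Finset.Icc 1 (L - 1), (1 - x / 2 ^ j) ^ K)
        ≤ x * (1 - (1 - x) ^ (s + K)) * 1 :=
      mul_le_mul_of_nonneg_left hprod.2 (by positivity)
    have h2' : x * (1 - (1 - x) ^ (s + K)) ≤ x * (((s:ℝ) + K) * x) := by
      apply mul_le_mul_of_nonneg_left _ hx0.le
      push_cast at hb ⊢
      linarith
    calc _ ≤ x * (1 - (1 - x) ^ (s + K)) * 1 := h1'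
      _ = x * (1 - (1 - x) ^ (s + K)) := by ring
      _ ≤ x * (((s:ℝ) + K) * x) := h2'
      _ = ((s:ℝ) + K) * x ^ 2 := by ring
  -- term 2
  have h2 : ∑ l ∈ Finset.Icc 1 (L - 1),
          (x / 2 ^ l) * (1 - (1 - x / 2 ^ l) ^ K) *
            (∏ j ∈ Finset.Icc (l + 1) (L - 1), (1 - x / 2 ^ j) ^ K)
      ≤ (K : ℝ) * x ^ 2 * (1/3) := by
    have hterm : ∀ l ∈ Finset.Icc 1 (L-1),
        (x / 2 ^ l) * (1 - (1 - x / 2 ^ l) ^ K) *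
            (∏ j ∈ Finset.Icc (l + 1) (L - 1), (1 - x / 2 ^ j) ^ K)
        ≤ (K : ℝ) * x ^ 2 * (1/4) ^ l := by
      intro l hl
      have hl1 : 1 ≤ l := (Finset.mem_Icc.mp hl).1
      have h2l : (2:ℝ) ≤ 2 ^ l := by
        calc (2:ℝ) = 2 ^ 1 := (pow_one 2).symm
        _ ≤ 2 ^ l := pow_le_pow_right₀ (by norm_num) hl1
      have hpos : (0:ℝ) < 2 ^ l := by positivity
      have hyle : x / 2 ^ l ≤ 1 := by
        rw [div_le_one hpos]; linarith
      have hyge : 0 ≤ x / 2 ^ l := by positivity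
      have hb := aux_bern (x / 2 ^ l) hyge hyle K
      have hnn := aux_bern_nonneg (x / 2 ^ l) hyge hyle K
      have hp := aux_prod_mem x hx0 hx1 K (Finset.Icc (l+1) (L-1))
        (fun j hj => le_trans (by omega) (Finset.mem_Icc.mp hj).1)
      calc (x / 2 ^ l) * (1 - (1 - x / 2 ^ l) ^ K) *
            (∏ j ∈ Finset.Icc (l + 1) (L - 1), (1 - x / 2 ^ j) ^ K)
          ≤ (x / 2 ^ l) * (1 - (1 - x / 2 ^ l) ^ K) * 1 :=
            mul_le_mul_of_nonneg_left hp.2 (by positivity)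
        _ = (x / 2 ^ l) * (1 - (1 - x / 2 ^ l) ^ K) := by ring
        _ ≤ (x / 2 ^ l) * ((K:ℝ) * (x / 2 ^ l)) :=
            mul_le_mul_of_nonneg_left hb hyge
        _ = (K : ℝ) * x ^ 2 * (1 / 2 ^ l) ^ 2 := by
            field_simp
        _ = (K : ℝ) * x ^ 2 * (1/4) ^ l := by
            have h4 : ((1:ℝ)/4) ^ l = ((1:ℝ)/2^l) ^ 2 := by
              rw [div_pow, div_pow, one_pow, one_pow, ← pow_mul, show (4:ℝ) = 2^2 from by norm_num, ← pow_mul, Nat.mul_comm]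
            rw [h4]
    calc ∑ l ∈ Finset.Icc 1 (L - 1),
          (x / 2 ^ l) * (1 - (1 - x / 2 ^ l) ^ K) *
            (∏ j ∈ Finset.Icc (l + 1) (L - 1), (1 - x / 2 ^ j) ^ K)
        ≤ ∑ l ∈ Finset.Icc 1 (L-1), (K : ℝ) * x ^ 2 * (1/4) ^ l :=
          Finset.sum_le_sum hterm
      _ = (K : ℝ) * x ^ 2 * ∑ l ∈ Finset.Icc 1 (L-1), ((1:ℝ)/4) ^ l := by
          rw [Finset.mul_sum]
      _ ≤ (K : ℝ) * x ^ 2 * (1/3) := by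
          apply mul_le_mul_of_nonneg_left _ (by positivity)
          have := aux_geom (L-1)
          have hp : (0:ℝ) ≤ (1/3) * (1/4) ^ (L-1) := by positivity
          linarith
  have hK1 : (1:ℝ) ≤ K := by exact_mod_cast hK
  have hs : (0:ℝ) ≤ s := Nat.cast_nonneg s
  nlinarith [sq_nonneg x, mul_pos hx0 hx0]
end

section
/- Let s ≥ 0 and K ≥ 1 be integers, L = log₂ of the number of decay phases (L ≥ 1 integer), and x ∈ (0,1]. Define f(x) = x(1-(1-x)^{s+K}) ∏_{j=1}^{L-1} (1 - x/2^j)^K + ∑_{ℓ=1}^{L-1} (x/2^ℓ)(1-(1-x/2^ℓ)^K) ∏_{j=ℓ+1}^{L-1} (1 - x/2^j)^K, where 2^L/K ≥ x (so that all stepsize factors x/2^j with j ≥ ⌊log₂(Kx)⌋-1 lie below 2/K within range). Then f(x) ≤ 8/K. -/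
open Finset Real

lemma aux_exp_ge (m : ℕ) (hm : 1 ≤ m) : (9/5:ℝ) * 4^m ≤ Real.exp (2^m) := by
  induction m, hm using Nat.le_induction with
  | base =>
    have h := Real.exp_one_gt_d9
    have h2 : Real.exp 2 = Real.exp 1 ^ 2 := by
      rw [← Real.exp_nat_mul]; norm_num
    have h3 : (2:ℝ)^1 = 2 := by norm_num
    rw [h3, h2]; nlinarith
  | succ m hm ih =>
    have h1 : Real.exp ((2:ℝ)^(m+1)) = Real.exp (2^m) ^ 2 := by
      rw [← Real.exp_nat_mul]; ring_nf
    have h4 : (4:ℝ)^m ≥ 4 := by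
      calc (4:ℝ)^m ≥ 4^1 := by apply pow_le_pow_right₀ (by norm_num) hm
      _ = 4 := by norm_num
    have hE : Real.exp ((2:ℝ)^m) > 0 := Real.exp_pos _
    rw [h1, show (4:ℝ)^(m+1) = 4 * 4^m by ring]
    nlinarith [sq_nonneg ((9/5:ℝ)*4^m)]

lemma aux_term_le (m : ℕ) (hm : 1 ≤ m) :
    (2:ℝ)^m * Real.exp (-(2^m)) ≤ (5/9) * (1/2)^m := by
  have h := aux_exp_ge m hm
  have hE : (0:ℝ) < (9/5:ℝ) * 4^m := by positivity
  have h2 : (0:ℝ) < 2^m := by positivity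
  rw [Real.exp_neg]
  calc (2:ℝ)^m * (Real.exp (2^m))⁻¹ ≤ (2:ℝ)^m * ((9/5:ℝ)*4^m)⁻¹ := by gcongr
    _ = (5/9) * (1/2)^m := by
        rw [show (4:ℝ) = 2*2 by norm_num, mul_pow]
        field_simp
        rw [← mul_pow]; norm_num

lemma geo (r : ℝ) (h0 : 0 ≤ r) (h1 : r < 1) (n : ℕ) : ∑ i ∈ range n, r^i ≤ 1/(1-r) := by
  have h2 : 0 < 1 - r := by linarith
  have hp : 0 ≤ r ^ n := pow_nonneg h0 n
  rw [geom_sum_eq h1.ne, show (r^n-1)/(r-1) = (1-r^n)/(1-r) by rw [← neg_div_neg_eq]; ring_nf]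
  gcongr
  linarith

lemma aux_anti (a b : ℝ) (ha : 1 ≤ a) (hab : a ≤ b) :
    b * Real.exp (-b) ≤ a * Real.exp (-a) := by
  have h1 : b ≤ a * Real.exp (b - a) := by
    have h2 : (b - a) + 1 ≤ Real.exp (b - a) := Real.add_one_le_exp _
    nlinarith
  calc b * Real.exp (-b) ≤ (a * Real.exp (b-a)) * Real.exp (-b) := by
        apply mul_le_mul_of_nonneg_right h1 (Real.exp_nonneg _)
    _ = a * Real.exp (-a) := by rw [mul_assoc, ← Real.exp_add]; ring_nf

lemma aux_sum_exp (n : ℕ) : ∑ m ∈ range n, (2:ℝ)^m * Real.exp (-(2^m)) ≤ 1 := by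
  rcases Nat.eq_zero_or_pos n with h | h
  · simp [h]
  · rw [range_eq_Ico, Finset.sum_eq_sum_Ico_succ_bot h]
    have h0 : (2:ℝ)^(0:ℕ) * Real.exp (-(2^(0:ℕ))) ≤ 2/5 := by
      have h1 : Real.exp (-(1:ℝ)) = (Real.exp 1)⁻¹ := by rw [Real.exp_neg]
      have h3 : Real.exp (-(1:ℝ)) ≤ 2/5 := by
        rw [h1, inv_le_comm₀ (Real.exp_pos 1) (by norm_num)]
        nlinarith [Real.exp_one_gt_d9]
      simpa using h3
    have htail : ∑ m ∈ Ico 1 n, (2:ℝ)^m * Real.exp (-(2^m)) ≤ 5/9 := by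
      calc ∑ m ∈ Ico 1 n, (2:ℝ)^m * Real.exp (-(2^m))
          ≤ ∑ m ∈ Ico 1 n, (5/9:ℝ) * (1/2)^m := by
            apply Finset.sum_le_sum
            intro i hi
            exact aux_term_le i (Finset.mem_Ico.mp hi).1
        _ = (5/9:ℝ) * ∑ m ∈ Ico 1 n, (1/2:ℝ)^m := by rw [Finset.mul_sum]
        _ ≤ (5/9:ℝ) * 1 := by
            have hs : ∑ m ∈ Ico 1 n, (1/2:ℝ)^m ≤ 1 := by
              have h2 : ∑ m ∈ Ico 0 n, (1/2:ℝ)^m ≤ 2 := by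
                rw [← range_eq_Ico]
                calc ∑ m ∈ range n, (1/2:ℝ)^m ≤ 1/(1-1/2) := geo _ (by norm_num) (by norm_num) n
                _ = 2 := by norm_num
              rw [Finset.sum_eq_sum_Ico_succ_bot h] at h2
              norm_num at h2
              linarith
            nlinarith
        _ = 5/9 := by ring
    have hterm0 : (2:ℝ)^(0:ℕ) * Real.exp (-(2^(0:ℕ))) + ∑ m ∈ Ico (0+1) n, (2:ℝ)^m * Real.exp (-(2^m)) ≤ 1 := by
      norm_num at h0 htail ⊢
      linarith
    exact hterm0

noncomputable def auxT (s K L : ℕ) (x : ℝ) (l : ℕ) : ℝ :=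
  x/2^l * (1 - (1 - x/2^l) ^ (if l = 0 then s + K else K)) *
    ∏ j ∈ Finset.Icc (l+1) (L-1), (1 - x/2^j)^K

lemma aux_mul_bound (a m p b : ℝ) (ha : 0 ≤ a) (hmb : m*p ≤ b) : a*m*p ≤ a*b := by
  rw [mul_assoc]; exact mul_le_mul_of_nonneg_left hmb ha

section
variable (s K L : ℕ) (x : ℝ)

lemma aux_fac01 (j : ℕ) (hx0 : 0 < x) (hx1 : x ≤ 1) :
    0 ≤ 1 - x/2^j ∧ 1 - x/2^j ≤ 1 := by
  have h1 : (1:ℝ) ≤ 2^j := one_le_pow₀ (by norm_num : (1:ℝ) ≤ 2)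
  have h2 : (0:ℝ) < 2^j := by positivity
  have h4 : x/2^j ≤ 1 := (div_le_one h2).mpr (hx1.trans h1)
  have h5 : 0 < x/2^j := by positivity
  constructor <;> linarith

lemma aux_P01 (l : ℕ) (hx0 : 0 < x) (hx1 : x ≤ 1) :
    0 ≤ (∏ j ∈ Finset.Icc (l+1) (L-1), (1 - x/2^j)^K) ∧
    (∏ j ∈ Finset.Icc (l+1) (L-1), (1 - x/2^j)^K) ≤ 1 := by
  constructor
  · apply Finset.prod_nonneg
    intro j _
    exact pow_nonneg (aux_fac01 x j hx0 hx1).1 K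
  · apply Finset.prod_le_one
    · intro j _; exact pow_nonneg (aux_fac01 x j hx0 hx1).1 K
    · intro j _; exact pow_le_one₀ (aux_fac01 x j hx0 hx1).1 (aux_fac01 x j hx0 hx1).2

lemma aux_mid01 (l e : ℕ) (hx0 : 0 < x) (hx1 : x ≤ 1) :
    0 ≤ 1 - (1 - x/2^l)^e ∧ 1 - (1 - x/2^l)^e ≤ 1 := by
  have h := aux_fac01 x l hx0 hx1
  have h1 : (1 - x/2^l)^e ≤ 1 := pow_le_one₀ h.1 h.2
  have h2 : 0 ≤ (1 - x/2^l)^e := pow_nonneg h.1 e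
  constructor <;> linarith

lemma auxT_nonneg (l : ℕ) (hx0 : 0 < x) (hx1 : x ≤ 1) : 0 ≤ auxT s K L x l := by
  unfold auxT
  have h1 := aux_mid01 x l (if l = 0 then s + K else K) hx0 hx1
  have h2 := aux_P01 K L x l hx0 hx1
  have h3 : (0:ℝ) < 2^l := by positivity
  have h4 : (0:ℝ) ≤ x/2^l := by positivity
  exact mul_nonneg (mul_nonneg h4 h1.1) h2.1

lemma auxT_le1 (l : ℕ) (hx0 : 0 < x) (hx1 : x ≤ 1) : auxT s K L x l ≤ x/2^l := by
  unfold auxT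
  have h1 := aux_mid01 x l (if l = 0 then s + K else K) hx0 hx1
  have h2 := aux_P01 K L x l hx0 hx1
  have h4 : (0:ℝ) ≤ x/2^l := by positivity
  calc x/2^l * (1 - (1 - x/2^l) ^ (if l = 0 then s + K else K)) *
        ∏ j ∈ Finset.Icc (l+1) (L-1), (1 - x/2^j)^K ≤ x/2^l * 1 :=
        aux_mul_bound _ _ _ _ h4 (mul_le_one₀ h1.2 h2.1 h2.2)
    _ = x/2^l := mul_one _

lemma auxT_le2 (l : ℕ) (hl : 1 ≤ l) (hx0 : 0 < x) (hx1 : x ≤ 1) :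
    auxT s K L x l ≤ K * (x/2^l)^2 := by
  unfold auxT
  rw [if_neg (by omega : l ≠ 0)]
  have h2 := aux_P01 K L x l hx0 hx1
  have h4 : (0:ℝ) ≤ x/2^l := by positivity
  have hm := aux_mid01 x l K hx0 hx1
  have hb : 1 - (1 - x/2^l)^K ≤ K * (x/2^l) := by
    have h5 := one_add_mul_le_pow (by nlinarith [(aux_fac01 x l hx0 hx1).1] : (-2:ℝ) ≤ -(x/2^l)) K
    have h6 : (1 + -(x/2^l)) = 1 - x/2^l := by ring
    rw [h6] at h5
    nlinarith
  calc x/2^l * (1 - (1 - x/2^l)^K) * ∏ j ∈ Finset.Icc (l+1) (L-1), (1 - x/2^j)^K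
      ≤ x/2^l * (K * (x/2^l)) := by
        apply aux_mul_bound _ _ _ _ h4
        calc (1 - (1 - x/2^l)^K) * ∏ j ∈ Finset.Icc (l+1) (L-1), (1 - x/2^j)^K
            ≤ (1 - (1 - x/2^l)^K) * 1 := mul_le_mul_of_nonneg_left h2.2 hm.1
          _ = 1 - (1 - x/2^l)^K := mul_one _
          _ ≤ K * (x/2^l) := hb
    _ = K * (x/2^l)^2 := by ring

lemma auxT_le3 (l : ℕ) (hl : l + 1 ≤ L - 1) (hx0 : 0 < x) (hx1 : x ≤ 1) :
    auxT s K L x l ≤ x/2^l * Real.exp (-(K * (x/2^(l+1)))) := by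
  unfold auxT
  have hfac := aux_fac01 x (l+1) hx0 hx1
  have hP : (∏ j ∈ Finset.Icc (l+1) (L-1), (1 - x/2^j)^K) ≤ (1 - x/2^(l+1))^K := by
    have hins : Finset.Icc (l+1) (L-1) = insert (l+1) (Finset.Icc (l+2) (L-1)) := by
      ext i; simp [Finset.mem_Icc, Finset.mem_insert]; omega
    rw [hins, Finset.prod_insert (by simp)]
    have h1 : (0:ℝ) ≤ (1 - x/2^(l+1))^K := pow_nonneg hfac.1 K
    calc (1 - x/2^(l+1))^K * ∏ j ∈ Finset.Icc (l+1+1) (L-1), (1 - x/2^j)^K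
        ≤ (1 - x/2^(l+1))^K * 1 := by
          apply mul_le_mul_of_nonneg_left _ h1
          apply Finset.prod_le_one
          · intro j _; exact pow_nonneg (aux_fac01 x j hx0 hx1).1 K
          · intro j _; exact pow_le_one₀ (aux_fac01 x j hx0 hx1).1 (aux_fac01 x j hx0 hx1).2
      _ = (1 - x/2^(l+1))^K := mul_one _
  have hexp : (1 - x/2^(l+1))^K ≤ Real.exp (-(K * (x/2^(l+1)))) := by
    have h1 : 1 - x/2^(l+1) ≤ Real.exp (-(x/2^(l+1))) := by
      have := Real.add_one_le_exp (-(x/2^(l+1)))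
      linarith
    calc (1 - x/2^(l+1))^K ≤ (Real.exp (-(x/2^(l+1))))^K := pow_le_pow_left₀ hfac.1 h1 K
      _ = Real.exp (-(K * (x/2^(l+1)))) := by rw [← Real.exp_nat_mul]; ring_nf
  have hm := aux_mid01 x l (if l = 0 then s + K else K) hx0 hx1
  have h4 : (0:ℝ) ≤ x/2^l := by positivity
  have hPn := (aux_P01 K L x l hx0 hx1).1
  apply aux_mul_bound _ _ _ _ h4
  calc (1 - (1 - x/2^l) ^ (if l = 0 then s + K else K)) *
        ∏ j ∈ Finset.Icc (l+1) (L-1), (1 - x/2^j)^K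
      ≤ 1 * ∏ j ∈ Finset.Icc (l+1) (L-1), (1 - x/2^j)^K :=
        mul_le_mul_of_nonneg_right hm.2 hPn
    _ = ∏ j ∈ Finset.Icc (l+1) (L-1), (1 - x/2^j)^K := one_mul _
    _ ≤ Real.exp (-(K * (x/2^(l+1)))) := hP.trans hexp

end

theorem stmt_5 (s K L : ℕ) (hK : 1 ≤ K) (hL : 1 ≤ L) (x : ℝ) (hx0 : 0 < x) (hx1 : x ≤ 1)
    (hxL : x ≤ 2 ^ L / (K : ℝ)) :
    x * (1 - (1 - x) ^ (s + K)) * (∏ j ∈ Finset.Icc 1 (L - 1), (1 - x / 2 ^ j) ^ K)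
      + ∑ l ∈ Finset.Icc 1 (L - 1),
          (x / 2 ^ l) * (1 - (1 - x / 2 ^ l) ^ K) *
            (∏ j ∈ Finset.Icc (l + 1) (L - 1), (1 - x / 2 ^ j) ^ K)
    ≤ 8 / (K : ℝ) := by
  have hKr : (0:ℝ) < K := by exact_mod_cast hK
  have hEq : x * (1 - (1 - x) ^ (s + K)) * (∏ j ∈ Finset.Icc 1 (L - 1), (1 - x / 2 ^ j) ^ K)
      + ∑ l ∈ Finset.Icc 1 (L - 1),
          (x / 2 ^ l) * (1 - (1 - x / 2 ^ l) ^ K) *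
            (∏ j ∈ Finset.Icc (l + 1) (L - 1), (1 - x / 2 ^ j) ^ K)
      = ∑ l ∈ Finset.range L, auxT s K L x l := by
    have hrange : Finset.range L = insert 0 (Finset.Icc 1 (L-1)) := by
      ext i; simp [Finset.mem_Icc]; omega
    rw [hrange, Finset.sum_insert (by simp)]
    congr 1
    · unfold auxT; norm_num
    · apply Finset.sum_congr rfl
      intro l hl
      simp only [Finset.mem_Icc] at hl
      unfold auxT
      rw [if_neg (by omega : l ≠ 0)]
  rw [hEq]
  rcases le_or_gt ((K:ℝ)*x) 2 with hc | hc
  · -- easy case: Kx ≤ 2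
    calc ∑ l ∈ Finset.range L, auxT s K L x l
        ≤ ∑ l ∈ Finset.range L, x/2^l :=
          Finset.sum_le_sum fun l _ => auxT_le1 s K L x l hx0 hx1
      _ = ∑ l ∈ Finset.range L, x * (1/2:ℝ)^l := by
          apply Finset.sum_congr rfl; intro l _
          rw [one_div, inv_pow, div_eq_mul_inv]
      _ = x * ∑ l ∈ Finset.range L, (1/2:ℝ)^l := by rw [Finset.mul_sum]
      _ ≤ x * 2 := by
          apply mul_le_mul_of_nonneg_left _ hx0.le
          calc ∑ l ∈ Finset.range L, (1/2:ℝ)^l ≤ 1/(1-1/2) := geo _ (by norm_num) (by norm_num) L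
            _ = 2 := by norm_num
      _ ≤ 8/K := by
          rw [le_div_iff₀ hKr]; nlinarith
  · -- main case: Kx > 2
    have hn2 : 2 ≤ ⌊(K:ℝ)*x⌋₊ := Nat.le_floor (by exact_mod_cast hc.le)
    set t := Nat.log 2 ⌊(K:ℝ)*x⌋₊ with ht_def
    have ht1 : (2:ℝ)^t ≤ (K:ℝ)*x := by
      calc (2:ℝ)^t = ((2^t : ℕ) : ℝ) := by push_cast; ring
        _ ≤ (⌊(K:ℝ)*x⌋₊ : ℝ) := by
            exact_mod_cast Nat.pow_log_le_self 2 (by omega)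
        _ ≤ (K:ℝ)*x := Nat.floor_le (by positivity)
    have ht2 : (K:ℝ)*x < 2^(t+1) := by
      have h1 : (K:ℝ)*x < ⌊(K:ℝ)*x⌋₊ + 1 := Nat.lt_floor_add_one _
      have h2 : ⌊(K:ℝ)*x⌋₊ + 1 ≤ 2^(t+1) := Nat.lt_pow_succ_log_self (by norm_num) _
      calc (K:ℝ)*x < ⌊(K:ℝ)*x⌋₊ + 1 := h1
        _ = ((⌊(K:ℝ)*x⌋₊ + 1 : ℕ) : ℝ) := by push_cast; ring
        _ ≤ ((2^(t+1) : ℕ) : ℝ) := by exact_mod_cast h2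
        _ = 2^(t+1) := by push_cast; ring
    have htge1 : 1 ≤ t := by
      rw [ht_def]
      exact (Nat.le_log_iff_pow_le (by norm_num) (by omega)).mpr (by simpa using hn2)
    -- big-part bound
    have hbig : ∀ u : ℕ, u ≤ t → u ≤ L - 1 →
        ∑ l ∈ Finset.range u, auxT s K L x l ≤ 2/K := by
      intro u hut huL
      have step1 : ∀ l ∈ Finset.range u,
          auxT s K L x l ≤ (2/K) * ((2:ℝ)^(t-1-l) * Real.exp (-(2^(t-1-l)))) := by
        intro l hl
        rw [Finset.mem_range] at hl
        refine (auxT_le3 s K L x l (by omega) hx0 hx1).trans ?_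
        have h2pos : (0:ℝ) < 2^(l+1) := by positivity
        have hveq : (K:ℝ)*(x/2^(l+1)) = (K:ℝ)*x/2^(l+1) := (mul_div_assoc _ _ _).symm
        have hpow : (2:ℝ)^(t-1-l) * 2^(l+1) = 2^t := by
          rw [← pow_add]; congr 1; omega
        have hv : (2:ℝ)^(t-1-l) ≤ (K:ℝ)*(x/2^(l+1)) := by
          rw [hveq, le_div_iff₀ h2pos, hpow]; exact ht1
        have h1le : (1:ℝ) ≤ 2^(t-1-l) := one_le_pow₀ (by norm_num)
        have hanti := aux_anti _ _ h1le hv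
        have hxv : x/2^l = (2/K) * ((K:ℝ)*(x/2^(l+1))) := by
          rw [show (2:ℝ)^(l+1) = 2^l*2 from pow_succ 2 l]
          field_simp
        rw [hxv, mul_assoc]
        apply mul_le_mul_of_nonneg_left _ (by positivity : (0:ℝ) ≤ 2/K)
        exact hanti
      calc ∑ l ∈ Finset.range u, auxT s K L x l
          ≤ ∑ l ∈ Finset.range u, (2/K) * ((2:ℝ)^(t-1-l) * Real.exp (-(2^(t-1-l)))) :=
            Finset.sum_le_sum step1
        _ ≤ ∑ l ∈ Finset.range t, (2/K) * ((2:ℝ)^(t-1-l) * Real.exp (-(2^(t-1-l)))) := by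
            apply Finset.sum_le_sum_of_subset_of_nonneg
              (Finset.range_subset_range.mpr hut)
            intro i _ _; positivity
        _ = (2/K) * ∑ l ∈ Finset.range t, ((2:ℝ)^(t-1-l) * Real.exp (-(2^(t-1-l)))) := by
            rw [Finset.mul_sum]
        _ = (2/K) * ∑ m ∈ Finset.range t, ((2:ℝ)^m * Real.exp (-(2^m))) := by
            rw [Finset.sum_range_reflect (fun m => (2:ℝ)^m * Real.exp (-(2^m))) t]
        _ ≤ (2/K) * 1 :=
            mul_le_mul_of_nonneg_left (aux_sum_exp t) (by positivity)
        _ = 2/K := mul_one _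
    rcases le_or_gt t (L-1) with htL | htL
    · -- t ≤ L-1
      have htL' : t < L := by omega
      have hsplit : ∑ l ∈ Finset.range L, auxT s K L x l
          = ∑ l ∈ Finset.range t, auxT s K L x l + ∑ l ∈ Finset.Ico t L, auxT s K L x l := by
        rw [Finset.range_eq_Ico, ← Finset.sum_Ico_consecutive _ (Nat.zero_le t) htL'.le,
          ← Finset.range_eq_Ico]
      have hsplit2 : ∑ l ∈ Finset.Ico t L, auxT s K L x l
          = auxT s K L x t + ∑ l ∈ Finset.Ico (t+1) L, auxT s K L x l :=
        Finset.sum_eq_sum_Ico_succ_bot htL' _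
      have hb1 : ∑ l ∈ Finset.range t, auxT s K L x l ≤ 2/K := hbig t le_rfl htL
      have hb2 : auxT s K L x t ≤ 2/K := by
        refine (auxT_le1 s K L x t hx0 hx1).trans ?_
        rw [div_le_div_iff₀ (by positivity) hKr]
        have : (2:ℝ)^(t+1) = 2^t*2 := pow_succ 2 t
        nlinarith [ht2]
      have hb3 : ∑ l ∈ Finset.Ico (t+1) L, auxT s K L x l ≤ (4/3)/K := by
        have hxt : x/2^(t+1) ≤ 1/K := by
          rw [div_le_div_iff₀ (by positivity) hKr]
          nlinarith [ht2]
        calc ∑ l ∈ Finset.Ico (t+1) L, auxT s K L x l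
            ≤ ∑ l ∈ Finset.Ico (t+1) L, (K:ℝ) * (x/2^l)^2 := by
              apply Finset.sum_le_sum
              intro l hl
              rw [Finset.mem_Ico] at hl
              exact auxT_le2 s K L x l (by omega) hx0 hx1
          _ = ∑ i ∈ Finset.range (L-(t+1)), (K:ℝ) * (x/2^(t+1+i))^2 := by
              rw [Finset.sum_Ico_eq_sum_range]
          _ = ∑ i ∈ Finset.range (L-(t+1)), ((K:ℝ) * (x/2^(t+1))^2) * (1/4:ℝ)^i := by
              apply Finset.sum_congr rfl
              intro i _
              rw [pow_add]
              have h2i : (0:ℝ) < 2^i := by positivity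
              have h2t : (0:ℝ) < 2^(t+1) := by positivity
              have h4 : (4:ℝ)^i = 2^i * 2^i := by
                rw [show (4:ℝ) = 2*2 by norm_num, mul_pow]
              field_simp
              rw [← pow_mul, mul_comm i 2, pow_mul, ← mul_pow]; norm_num
          _ = ((K:ℝ) * (x/2^(t+1))^2) * ∑ i ∈ Finset.range (L-(t+1)), (1/4:ℝ)^i := by
              rw [← Finset.mul_sum]
          _ ≤ ((K:ℝ) * (x/2^(t+1))^2) * (4/3) := by
              apply mul_le_mul_of_nonneg_left _ (by positivity)
              calc ∑ i ∈ Finset.range (L-(t+1)), (1/4:ℝ)^i ≤ 1/(1-1/4) :=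
                    geo _ (by norm_num) (by norm_num) _
                _ = 4/3 := by norm_num
          _ ≤ (4/3)/K := by
              have h1 : (K:ℝ) * (x/2^(t+1))^2 ≤ (K:ℝ) * (1/K)^2 := by
                apply mul_le_mul_of_nonneg_left _ hKr.le
                apply pow_le_pow_left₀ (by positivity) hxt
              have h2 : (K:ℝ) * (1/K)^2 = 1/K := by field_simp
              rw [h2] at h1
              have h3 : (4:ℝ)/3/K = (1/K)*(4/3) := by ring
              rw [h3]
              exact mul_le_mul_of_nonneg_right h1 (by norm_num)
      rw [hsplit, hsplit2]
      have hinv : (0:ℝ) < 1/K := by positivity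
      have e1 : (2:ℝ)/K = 2*(1/K) := by ring
      have e2 : (4/3:ℝ)/K = (4/3)*(1/K) := by ring
      have e3 : (8:ℝ)/K = 8*(1/K) := by ring
      rw [e1] at hb1 hb2
      rw [e2] at hb3
      rw [e3]
      linarith
    · -- t ≥ L
      have hKx2L : (K:ℝ)*x ≤ 2^L := by
        rw [div_eq_mul_inv] at hxL
        calc (K:ℝ)*x ≤ (K:ℝ)*(2^L * (K:ℝ)⁻¹) := by
              apply mul_le_mul_of_nonneg_left hxL hKr.le
          _ = 2^L := by field_simp
      have hsplit3 : ∑ l ∈ Finset.range L, auxT s K L x l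
          = ∑ l ∈ Finset.range (L-1), auxT s K L x l + auxT s K L x (L-1) := by
        have hL1 : L - 1 + 1 = L := by omega
        rw [← Finset.sum_range_succ, hL1]
      rw [hsplit3]
      have hb1 : ∑ l ∈ Finset.range (L-1), auxT s K L x l ≤ 2/K := hbig (L-1) (by omega) le_rfl
      have hb2 : auxT s K L x (L-1) ≤ 2/K := by
        refine (auxT_le1 s K L x (L-1) hx0 hx1).trans ?_
        rw [div_le_div_iff₀ (by positivity) hKr]
        have hpow : (2:ℝ)^L = 2^(L-1)*2 := by
          rw [← pow_succ]; congr 1; omega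
        nlinarith [hKx2L]
      have hinv : (0:ℝ) < 1/K := by positivity
      have e1 : (2:ℝ)/K = 2*(1/K) := by ring
      have e3 : (8:ℝ)/K = 8*(1/K) := by ring
      rw [e1] at hb1 hb2
      rw [e3]
      linarith
end

section
/- Let s ≥ 0, K ≥ 10 be integers, L ≥ 1, and x ∈ (0, 1/(s+K)). Define f(x) = (x/2)(1-(1-2x)^{s+K})(1-2x)^K + ∑_{ℓ=1}^{L-1} (x/2^{ℓ+1})(1-(1-x/2^{ℓ-1})^K)(1-x/2^{ℓ-1})^K. Then f(x) ≥ (s+K)x²/40. -/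
set_option maxHeartbeats 1000000

theorem stmt_7 (s K L : ℕ) (hK : 10 ≤ K) (hL : 1 ≤ L) (x : ℝ) (hx0 : 0 < x)
    (hx1 : x < 1 / ((s : ℝ) + K)) :
    ((s : ℝ) + K) * x ^ 2 / 40 ≤
      (x / 2) * (1 - (1 - 2 * x) ^ (s + K)) * (1 - 2 * x) ^ K
        + ∑ l ∈ Finset.Icc 1 (L - 1),
            (x / 2 ^ (l + 1)) * (1 - (1 - x / 2 ^ (l - 1)) ^ K) * (1 - x / 2 ^ (l - 1)) ^ K := by
  set c : ℝ := (s : ℝ) + K with hc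
  clear_value c
  have hc10 : (10 : ℝ) ≤ c := by
    have : (10 : ℝ) ≤ (K : ℝ) := by exact_mod_cast hK
    have hs : (0 : ℝ) ≤ (s : ℝ) := Nat.cast_nonneg s
    linarith
  have hcpos : (0 : ℝ) < c := by linarith
  have hcx : c * x < 1 := by
    have h := (lt_div_iff₀ hcpos).mp hx1
    nlinarith
  have hx10 : x < 1 / 10 := by
    have h1 : 1 / c ≤ 1 / 10 := by apply one_div_le_one_div_of_le <;> linarith
    linarith
  have hKx : (K : ℝ) * x ≤ 1 := by
    have hKc : (K : ℝ) ≤ c := by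
      have hs : (0 : ℝ) ≤ (s : ℝ) := Nat.cast_nonneg s
      rw [hc]; linarith
    nlinarith [Nat.cast_nonneg (α := ℝ) K]
  -- nonnegativity of the sum
  have hsum : 0 ≤ ∑ l ∈ Finset.Icc 1 (L - 1),
      (x / 2 ^ (l + 1)) * (1 - (1 - x / 2 ^ (l - 1)) ^ K) * (1 - x / 2 ^ (l - 1)) ^ K := by
    apply Finset.sum_nonneg
    intro l _
    have h2p : (1 : ℝ) ≤ 2 ^ (l - 1) := by
      calc (1:ℝ) = 1 ^ (l-1) := (one_pow _).symm
      _ ≤ 2 ^ (l - 1) := pow_le_pow_left₀ (by norm_num) (by norm_num) _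
    have hfrac : x / 2 ^ (l - 1) ≤ x := by
      apply div_le_self hx0.le h2p
    have hb0 : 0 ≤ 1 - x / 2 ^ (l - 1) := by linarith
    have hb1 : 1 - x / 2 ^ (l - 1) ≤ 1 := by
      have : 0 ≤ x / 2 ^ (l - 1) := by positivity
      linarith
    have hpow1 : (1 - x / 2 ^ (l - 1)) ^ K ≤ 1 := pow_le_one₀ hb0 hb1
    have hpow0 : 0 ≤ (1 - x / 2 ^ (l - 1)) ^ K := pow_nonneg hb0 K
    have hxp : 0 ≤ x / 2 ^ (l + 1) := by positivity
    have hmid : 0 ≤ 1 - (1 - x / 2 ^ (l - 1)) ^ K := by linarith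
    exact mul_nonneg (mul_nonneg hxp hmid) hpow0
  -- Step a : 1 - (1-2x)^(s+K) ≥ (3/4) c x
  have hxle : x ≤ 1 := by linarith
  have hn : ((s + K : ℕ) : ℝ) = c := by push_cast [hc]; ring
  have hbern : 1 + c * x ≤ (1 + x) ^ (s + K) := by
    have := one_add_mul_le_pow (a := x) (by linarith) (s + K)
    rw [hn] at this
    linarith
  have hprod : (1 - x) ^ (s + K) * (1 + x) ^ (s + K) ≤ 1 := by
    rw [← mul_pow]
    have h1 : (1 - x) * (1 + x) = 1 - x ^ 2 := by ring
    rw [h1]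
    apply pow_le_one₀ (by nlinarith) (by nlinarith)
  have hP0 : 0 ≤ (1 - x) ^ (s + K) := pow_nonneg (by linarith) _
  have hA' : (1 - x) ^ (s + K) ≤ 1 - c * x / 2 := by
    have h1 : (1 - x) ^ (s + K) * (1 + c * x) ≤ 1 := by
      calc (1 - x) ^ (s + K) * (1 + c * x) ≤ (1 - x) ^ (s + K) * (1 + x) ^ (s + K) :=
            mul_le_mul_of_nonneg_left hbern hP0
        _ ≤ 1 := hprod
    have hcx0 : 0 < c * x := mul_pos hcpos hx0
    have hh : 0 ≤ c * x * (1 - c * x) := mul_nonneg hcx0.le (by linarith)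
    have h2 : (1 : ℝ) ≤ (1 - c * x / 2) * (1 + c * x) := by
      have e : (1 - c * x / 2) * (1 + c * x) = 1 + (c * x * (1 - c * x)) / 2 := by ring
      rw [e]; linarith
    have h3 : 0 < 1 + c * x := by linarith
    have h4 : (1 - x) ^ (s + K) * (1 + c * x) ≤ (1 - c * x / 2) * (1 + c * x) := le_trans h1 h2
    exact (mul_le_mul_iff_of_pos_right h3).mp h4
  have h2x : (1 - 2 * x) ^ (s + K) ≤ ((1 - x) ^ (s + K)) ^ 2 := by
    have hb : (0 : ℝ) ≤ 1 - 2 * x := by linarith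
    have hle : 1 - 2 * x ≤ (1 - x) ^ 2 := by nlinarith
    calc (1 - 2 * x) ^ (s + K) ≤ ((1 - x) ^ 2) ^ (s + K) := pow_le_pow_left₀ hb hle _
      _ = ((1 - x) ^ (s + K)) ^ 2 := pow_right_comm _ _ _
  have hA : 3 / 4 * (c * x) ≤ 1 - (1 - 2 * x) ^ (s + K) := by
    have h1 : ((1 - x) ^ (s + K)) ^ 2 ≤ (1 - c * x / 2) ^ 2 :=
      pow_le_pow_left₀ hP0 hA' 2
    have hcx0 : 0 < c * x := mul_pos hcpos hx0
    have hh : 0 ≤ c * x * (1 - c * x) := mul_nonneg hcx0.le (by linarith)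
    have e : 1 - (1 - c * x / 2) ^ 2 = 3 / 4 * (c * x) + (c * x * (1 - c * x)) / 4 + (c * x * (1 - c * x)) / 4 - (c * x * (1 - c * x)) / 4 := by ring
    have e2 : 1 - (1 - c * x / 2) ^ 2 = 3 / 4 * (c * x) + (c * x * (1 - c * x)) / 4 := by ring
    linarith [h2x, h1, hh, e2]
  -- Step b : (1-2x)^K ≥ 1/15
  have h2x0 : (0 : ℝ) < 1 - 2 * x := by linarith
  have hB : (1 : ℝ) / 15 ≤ (1 - 2 * x) ^ K := by
    set u : ℝ := 2 * x / (1 - 2 * x) with hu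
    have hinv : 1 / (1 - 2 * x) = 1 + u := by
      rw [hu]; field_simp; ring
    have hexpu : 1 / (1 - 2 * x) ≤ Real.exp u := by
      rw [hinv]
      have := Real.add_one_le_exp u
      linarith
    have hinvpos : (0 : ℝ) < 1 / (1 - 2 * x) := by positivity
    have hpowK : (1 / (1 - 2 * x)) ^ K ≤ Real.exp ((K : ℝ) * u) := by
      calc (1 / (1 - 2 * x)) ^ K ≤ (Real.exp u) ^ K := pow_le_pow_left₀ hinvpos.le hexpu K
        _ = Real.exp ((K : ℝ) * u) := by rw [← Real.exp_nat_mul]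
    have hKu : (K : ℝ) * u ≤ 5 / 2 := by
      have hub : u ≤ 5 / 2 * x := by
        rw [hu, div_le_iff₀ h2x0]
        nlinarith
      have hK0 : (0 : ℝ) ≤ (K : ℝ) := Nat.cast_nonneg K
      calc (K : ℝ) * u ≤ (K : ℝ) * (5 / 2 * x) := mul_le_mul_of_nonneg_left hub hK0
        _ = 5 / 2 * ((K : ℝ) * x) := by ring
        _ ≤ 5 / 2 := by nlinarith
    have hexp15 : Real.exp (5 / 2) < 15 := by
      have h1 : Real.exp ((5:ℝ) / 2) ^ 2 = Real.exp 5 := by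
        rw [← Real.exp_nat_mul]; norm_num
      have h2 : Real.exp (5 : ℝ) = Real.exp 1 ^ 5 := by
        rw [← Real.exp_nat_mul]; norm_num
      have h3 : Real.exp 1 < 2.7182818286 := Real.exp_one_lt_d9
      have h4 : Real.exp 1 ^ 5 < 2.7182818286 ^ 5 :=
        pow_lt_pow_left₀ h3 (Real.exp_pos 1).le (by norm_num)
      have h5 : (2.7182818286 : ℝ) ^ 5 < 225 := by norm_num
      nlinarith [Real.exp_pos ((5:ℝ)/2)]
    have hfin : (1 / (1 - 2 * x)) ^ K ≤ 15 := by
      have := Real.exp_le_exp.mpr hKu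
      linarith [hpowK]
    have hid : (1 - 2 * x) ^ K * (1 / (1 - 2 * x)) ^ K = 1 := by
      rw [← mul_pow]
      field_simp
      simp
    have hpos : (0 : ℝ) < (1 - 2 * x) ^ K := pow_pos h2x0 K
    nlinarith
  -- combine
  have hA0 : 0 ≤ 1 - (1 - 2 * x) ^ (s + K) := by nlinarith
  have hmain : c * x ^ 2 / 40 ≤ (x / 2) * (1 - (1 - 2 * x) ^ (s + K)) * (1 - 2 * x) ^ K := by
    have h1 : 3 / 4 * (c * x) * (1 / 15) ≤ (1 - (1 - 2 * x) ^ (s + K)) * (1 - 2 * x) ^ K :=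
      mul_le_mul hA hB (by norm_num) hA0
    have h2 : (x / 2) * (3 / 4 * (c * x) * (1 / 15)) ≤
        (x / 2) * ((1 - (1 - 2 * x) ^ (s + K)) * (1 - 2 * x) ^ K) :=
      mul_le_mul_of_nonneg_left h1 (by linarith)
    calc c * x ^ 2 / 40 = (x / 2) * (3 / 4 * (c * x) * (1 / 15)) := by ring
      _ ≤ (x / 2) * ((1 - (1 - 2 * x) ^ (s + K)) * (1 - 2 * x) ^ K) := h2
      _ = (x / 2) * (1 - (1 - 2 * x) ^ (s + K)) * (1 - 2 * x) ^ K := by ring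
  linarith
end

section
/- Let s ≥ 0, K ≥ 10 be integers, L ≥ 1, and x ∈ [1/(s+K), 1/K). Define f(x) = (x/2)(1-(1-2x)^{s+K})(1-2x)^K + ∑_{ℓ=1}^{L-1} (x/2^{ℓ+1})(1-(1-x/2^{ℓ-1})^K)(1-x/2^{ℓ-1})^K. Then f(x) ≥ x/40. -/
open Real

/-- For `0 ≤ t < 1`, `exp (-(t*(2-t)/(2*(1-t)))) ≤ 1 - t`. -/
lemma aux_one_sub_ge_exp {t : ℝ} (h0 : 0 ≤ t) (h1 : t < 1) :
    Real.exp (-(t * (2 - t) / (2 * (1 - t)))) ≤ 1 - t := by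
  set c : ℝ := t * (2 - t) / (2 * (1 - t)) with hc
  have ht : 0 < 1 - t := by linarith
  have hcnn : 0 ≤ c := by
    apply div_nonneg
    · nlinarith
    · nlinarith
  have hkey : 1 / (1 - t) ≤ 1 + c + c ^ 2 / 2 := by
    have hdiff : 1 + c + c ^ 2 / 2 - 1 / (1 - t) = t ^ 4 / (8 * (1 - t) ^ 2) := by
      rw [hc]; field_simp; ring
    have hpos : 0 ≤ t ^ 4 / (8 * (1 - t) ^ 2) := by positivity
    linarith
  have hexp : 1 / (1 - t) ≤ Real.exp c :=
    hkey.trans (Real.quadratic_le_exp_of_nonneg hcnn)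
  rw [Real.exp_neg]
  rw [div_le_iff₀ ht] at hexp
  rw [inv_le_iff_one_le_mul₀ (Real.exp_pos c)]
  nlinarith [Real.exp_pos c]

lemma aux_exp94 : Real.exp (9 / 4) < 10 := by
  have h4 : Real.exp (9 / 4) ^ 4 = Real.exp 9 := by
    rw [← Real.exp_nat_mul]; norm_num
  have h9 : Real.exp 9 = Real.exp 1 ^ 9 := by
    rw [← Real.exp_nat_mul]; norm_num
  have he : Real.exp 1 < 2.7182818286 := Real.exp_one_lt_d9
  have hpos : (0:ℝ) < Real.exp 1 := Real.exp_pos 1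
  have : Real.exp 1 ^ 9 < 2.7182818286 ^ 9 :=
    pow_lt_pow_left₀ he hpos.le (by norm_num)
  have hlt : Real.exp (9 / 4) ^ 4 < 10 ^ 4 := by
    rw [h4, h9]
    calc Real.exp 1 ^ 9 < 2.7182818286 ^ 9 := this
    _ < 10 ^ 4 := by norm_num
  exact lt_of_pow_lt_pow_left₀ 4 (by norm_num) hlt


lemma aux_A (s K : ℕ) (x : ℝ) (hxpos : 0 < x) (hy : 0 < 1 - 2 * x)
    (hsK : (0:ℝ) < (s:ℝ) + K) (hx0 : 1 / ((s : ℝ) + K) ≤ x) :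
    (1 - 2 * x) ^ (s + K) ≤ 1 / 2 := by
  have h1 : 1 - 2 * x ≤ Real.exp (-(2 * x)) := by
    have := Real.add_one_le_exp (-(2 * x)); linarith
  have h2 : (1 - 2 * x) ^ (s + K) ≤ Real.exp (-(2 * x)) ^ (s + K) :=
    pow_le_pow_left₀ hy.le h1 _
  have h3 : Real.exp (-(2 * x)) ^ (s + K) = Real.exp (-(2 * x) * (s + K)) := by
    rw [← Real.exp_nat_mul]; congr 1; push_cast; ring
  have h4 : -(2 * x) * ((s:ℝ) + K) ≤ -2 := by
    have : (1:ℝ) ≤ x * ((s:ℝ) + K) := by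
      rw [div_le_iff₀ hsK] at hx0; linarith
    nlinarith
  have h5 : Real.exp (-(2 * x) * ((s:ℝ) + K)) ≤ Real.exp (-2) :=
    Real.exp_le_exp.mpr h4
  have h6 : Real.exp (-2:ℝ) ≤ 1 / 2 := by
    have h2e : (2:ℝ) ≤ Real.exp 2 := by
      have he1 : (2:ℝ) ≤ Real.exp 1 := by have := Real.exp_one_gt_d9; linarith
      have := Real.exp_le_exp.mpr (show (1:ℝ) ≤ 2 by norm_num)
      linarith
    have hme : Real.exp (-2:ℝ) * Real.exp 2 = 1 := by
      rw [← Real.exp_add]; norm_num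
    nlinarith [Real.exp_pos (-2:ℝ)]
  have h3' : Real.exp (-(2*x)) ^ (s + K) = Real.exp (-(2 * x) * ((s:ℝ) + K)) := by
    rw [h3]
  calc (1 - 2 * x) ^ (s + K) ≤ Real.exp (-(2*x)) ^ (s + K) := h2
  _ = Real.exp (-(2 * x) * ((s:ℝ) + K)) := h3'
  _ ≤ Real.exp (-2) := h5
  _ ≤ 1/2 := h6

lemma aux_B (K : ℕ) (x : ℝ) (hxpos : 0 < x) (hx10 : x < 1/10)
    (hKx : (K:ℝ) * x < 1) : (1:ℝ) / 10 ≤ (1 - 2 * x) ^ K := by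
  set t : ℝ := 2 * x with ht
  have ht0 : 0 ≤ t := by positivity
  have ht1 : t < 1 := by linarith
  have hlow := aux_one_sub_ge_exp ht0 ht1
  have hmono : Real.exp (-(t * (2 - t) / (2 * (1 - t)))) ^ K ≤ (1 - t) ^ K :=
    pow_le_pow_left₀ (Real.exp_pos _).le hlow _
  have hexpK : Real.exp (-(t * (2 - t) / (2 * (1 - t)))) ^ K
      = Real.exp (-(t * (2 - t) / (2 * (1 - t))) * K) := by
    rw [← Real.exp_nat_mul]; ring_nf
  have hc94 : -(9/4 : ℝ) ≤ -(t * (2 - t) / (2 * (1 - t))) * K := by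
    have ht5 : t ≤ 1/5 := by
      have : x < 1/10 := hx10; rw [ht]; linarith
    have htpos : 0 < 1 - t := by linarith
    have hKt : (K:ℝ) * t < 2 := by rw [ht]; nlinarith
    rw [neg_mul, neg_le_neg_iff, div_mul_eq_mul_div, div_le_iff₀ (by positivity)]
    nlinarith [mul_nonneg ht0 ht0]
  have h94 : Real.exp (-(9/4:ℝ)) ≤ Real.exp (-(t * (2 - t) / (2 * (1 - t))) * K) :=
    Real.exp_le_exp.mpr hc94
  have h10 : (1:ℝ)/10 ≤ Real.exp (-(9/4:ℝ)) := by
    have hme : Real.exp (-(9/4:ℝ)) * Real.exp (9/4) = 1 := by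
      rw [← Real.exp_add]; norm_num
    nlinarith [aux_exp94, Real.exp_pos (-(9/4:ℝ)), Real.exp_pos (9/4:ℝ)]
  calc (1:ℝ)/10 ≤ Real.exp (-(9/4:ℝ)) := h10
  _ ≤ Real.exp (-(t * (2 - t) / (2 * (1 - t))) * K) := h94
  _ = Real.exp (-(t * (2 - t) / (2 * (1 - t)))) ^ K := hexpK.symm
  _ ≤ (1 - t) ^ K := hmono

theorem stmt_8 (s K L : ℕ) (hK : 10 ≤ K) (hL : 1 ≤ L) (x : ℝ)
    (hx0 : 1 / ((s : ℝ) + K) ≤ x) (hx1 : x < 1 / (K : ℝ)) :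
    x / 40 ≤
      (x / 2) * (1 - (1 - 2 * x) ^ (s + K)) * (1 - 2 * x) ^ K
        + ∑ l ∈ Finset.Icc 1 (L - 1),
            (x / 2 ^ (l + 1)) * (1 - (1 - x / 2 ^ (l - 1)) ^ K) * (1 - x / 2 ^ (l - 1)) ^ K := by
  have hKR : (10:ℝ) ≤ (K:ℝ) := by exact_mod_cast hK
  have hKpos : (0:ℝ) < K := by linarith
  have hsK : (0:ℝ) < (s:ℝ) + K := by positivity
  have hxpos : 0 < x := lt_of_lt_of_le (by positivity) hx0
  have hKx : (K:ℝ) * x < 1 := by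
    rw [lt_div_iff₀ hKpos] at hx1; linarith
  have hx10 : x < 1 / 10 := by
    calc x < 1 / K := hx1
    _ ≤ 1 / 10 := by apply one_div_le_one_div_of_le <;> linarith
  have hy : (0:ℝ) < 1 - 2 * x := by linarith
  -- sum is nonneg
  have hsum : 0 ≤ ∑ l ∈ Finset.Icc 1 (L - 1),
      (x / 2 ^ (l + 1)) * (1 - (1 - x / 2 ^ (l - 1)) ^ K) * (1 - x / 2 ^ (l - 1)) ^ K := by
    apply Finset.sum_nonneg
    intro l _
    have h2l : (1:ℝ) ≤ 2 ^ (l - 1) := one_le_pow₀ (by norm_num)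
    have hxl : x / 2 ^ (l - 1) ≤ x := by
      rw [div_le_iff₀ (by positivity)]
      nlinarith
    have hb0 : (0:ℝ) ≤ 1 - x / 2 ^ (l - 1) := by
      have := hxl; linarith
    have hb1 : (1 - x / 2 ^ (l - 1) : ℝ) ≤ 1 := by
      have : 0 ≤ x / 2 ^ (l - 1) := by positivity
      linarith
    have hp1 : (1 - x / 2 ^ (l - 1) : ℝ) ^ K ≤ 1 := pow_le_one₀ hb0 hb1
    have hp0 : (0:ℝ) ≤ (1 - x / 2 ^ (l - 1)) ^ K := pow_nonneg hb0 _
    exact mul_nonneg (mul_nonneg (by positivity) (by linarith)) hp0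
  -- first factor bound : (1 - 2x)^(s+K) ≤ 1/2
  have hA : (1 - 2 * x) ^ (s + K) ≤ 1 / 2 := aux_A s K x hxpos hy hsK hx0
  -- second factor bound : (1 - 2x)^K ≥ 1/10
  have hB : (1:ℝ) / 10 ≤ (1 - 2 * x) ^ K := aux_B K x hxpos hx10 hKx
  have hA' : (1:ℝ)/2 ≤ 1 - (1 - 2 * x) ^ (s + K) := by linarith
  have hmain : x / 40 ≤ (x / 2) * (1 - (1 - 2 * x) ^ (s + K)) * (1 - 2 * x) ^ K := by
    have hBpos : (0:ℝ) ≤ (1 - 2 * x) ^ K := pow_nonneg hy.le _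
    have e1 : x / 2 * (1/2) ≤ x / 2 * (1 - (1 - 2 * x) ^ (s + K)) :=
      mul_le_mul_of_nonneg_left hA' (by positivity)
    have hnn : (0:ℝ) ≤ x / 2 * (1 - (1 - 2 * x) ^ (s + K)) :=
      le_trans (by positivity) e1
    have e2 : x / 2 * (1 - (1 - 2 * x) ^ (s + K)) * (1/10)
        ≤ x / 2 * (1 - (1 - 2 * x) ^ (s + K)) * ((1 - 2 * x) ^ K) :=
      mul_le_mul_of_nonneg_left hB hnn
    have e3 : x / 2 * (1/2) * (1/10) ≤ x / 2 * (1 - (1 - 2 * x) ^ (s + K)) * (1/10) :=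
      mul_le_mul_of_nonneg_right e1 (by norm_num)
    calc x / 40 = x / 2 * (1/2) * (1/10) := by ring
    _ ≤ x / 2 * (1 - (1 - 2 * x) ^ (s + K)) * (1/10) := e3
    _ ≤ x / 2 * (1 - (1 - 2 * x) ^ (s + K)) * ((1 - 2 * x) ^ K) := e2
  linarith
end

section
/- For any vector x in a finite-dimensional inner product space whose whitened version z = H^{-1/2}x (H = E[xxᵀ] ≻ 0) satisfies the bounded kurtosis condition E[⟨v,x⟩⁴] ≤ α⟨v,Hv⟩² for all v, it holds that E[xxᵀAxxᵀ] ⪯ α·tr(HA)·H for every PSD matrix A. -/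
open Matrix MeasureTheory

/-- Elementary Cauchy–Schwarz for integrals. -/
lemma integral_cs {Ω : Type*} [MeasurableSpace Ω] (μ : Measure Ω) (f g : Ω → ℝ)
    (hf2 : Integrable (fun ω => f ω ^ 2) μ) (hg2 : Integrable (fun ω => g ω ^ 2) μ)
    (hfg : Integrable (fun ω => f ω * g ω) μ) :
    (∫ ω, f ω * g ω ∂μ) ^ 2 ≤ (∫ ω, f ω ^ 2 ∂μ) * ∫ ω, g ω ^ 2 ∂μ := by
  set F := ∫ ω, f ω ^ 2 ∂μ with hF
  set G := ∫ ω, g ω ^ 2 ∂μ with hG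
  set C := ∫ ω, f ω * g ω ∂μ with hC
  have key : ∀ t : ℝ, 0 ≤ F * (t * t) + (2 * C) * t + G := by
    intro t
    have hI1 : Integrable (fun ω => t ^ 2 * f ω ^ 2 + (2 * t) * (f ω * g ω)) μ :=
      (hf2.const_mul _).add (hfg.const_mul _)
    have hI : Integrable
        (fun ω => t ^ 2 * f ω ^ 2 + (2 * t) * (f ω * g ω) + g ω ^ 2) μ := hI1.add hg2
    have h0 : 0 ≤ ∫ ω, t ^ 2 * f ω ^ 2 + (2 * t) * (f ω * g ω) + g ω ^ 2 ∂μ := by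
      refine integral_nonneg fun ω => ?_
      simp only [Pi.zero_apply]
      nlinarith [sq_nonneg (t * f ω + g ω)]
    have e1 := integral_add (μ := μ)
      (f := fun ω => t ^ 2 * f ω ^ 2 + (2 * t) * (f ω * g ω))
      (g := fun ω => g ω ^ 2) hI1 hg2
    have e2 := integral_add (μ := μ)
      (f := fun ω => t ^ 2 * f ω ^ 2)
      (g := fun ω => (2 * t) * (f ω * g ω)) (hf2.const_mul _) (hfg.const_mul _)
    have e3 := integral_const_mul (μ := μ) (t ^ 2) (fun ω => f ω ^ 2)
    have e4 := integral_const_mul (μ := μ) (2 * t) (fun ω => f ω * g ω)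
    rw [e1, e2, e3, e4] at h0
    nlinarith [h0]
  have hdisc := discrim_le_zero key
  rw [discrim] at hdisc
  nlinarith [hdisc]

theorem stmt_13 {Ω : Type*} [MeasurableSpace Ω] (μ : Measure Ω) [IsProbabilityMeasure μ]
    {d : ℕ} (x : Ω → Fin d → ℝ) (H : Matrix (Fin d) (Fin d) ℝ) (α : ℝ)
    (hHpd : H.PosDef)
    (hH : ∀ u w : Fin d → ℝ, ∫ ω, (x ω ⬝ᵥ u) * (x ω ⬝ᵥ w) ∂μ = u ⬝ᵥ H.mulVec w)
    (hint : ∀ u w : Fin d → ℝ,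
      Integrable (fun ω => (x ω ⬝ᵥ u) ^ 2 * (x ω ⬝ᵥ w) ^ 2) μ)
    (hkurt : ∀ u : Fin d → ℝ, ∫ ω, (x ω ⬝ᵥ u) ^ 4 ∂μ ≤ α * (u ⬝ᵥ H.mulVec u) ^ 2)
    (A : Matrix (Fin d) (Fin d) ℝ) (hA : A.PosSemidef) (u : Fin d → ℝ) :
    ∫ ω, (x ω ⬝ᵥ A.mulVec (x ω)) * (x ω ⬝ᵥ u) ^ 2 ∂μ ≤
      α * (H * A).trace * (u ⬝ᵥ H.mulVec u) := by
  have hq : ∀ v : Fin d → ℝ, 0 ≤ v ⬝ᵥ H.mulVec v := by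
    intro v
    simpa using hHpd.posSemidef.dotProduct_mulVec_nonneg v
  have h4nn : ∀ v : Fin d → ℝ, 0 ≤ ∫ ω, (x ω ⬝ᵥ v) ^ 4 ∂μ := by
    intro v
    exact integral_nonneg fun ω => by positivity
  have hint4 : ∀ v : Fin d → ℝ, Integrable (fun ω => (x ω ⬝ᵥ v) ^ 4) μ := by
    intro v
    have := hint v v
    have h : (fun ω => (x ω ⬝ᵥ v) ^ 2 * (x ω ⬝ᵥ v) ^ 2) = fun ω => (x ω ⬝ᵥ v) ^ 4 := by
      funext ω; ring
    rwa [h] at this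
  rcases Nat.eq_zero_or_pos d with hd | hd
  · subst hd
    simp [Matrix.trace, dotProduct]
  have hα : 0 ≤ α := by
    set v : Fin d → ℝ := Pi.single ⟨0, hd⟩ 1 with hv
    have hvne : v ≠ 0 := by
      intro h
      have := congrFun h ⟨0, hd⟩
      simp [hv] at this
    have hqv : 0 < v ⬝ᵥ H.mulVec v := by simpa using hHpd.dotProduct_mulVec_pos hvne
    have h1 : 0 ≤ α * (v ⬝ᵥ H.mulVec v) ^ 2 := le_trans (h4nn v) (hkurt v)
    nlinarith [mul_pos hqv hqv, h1]
  set B := (open scoped MatrixOrder in CFC.sqrt A) with hBdef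
  have hBps : B.PosSemidef := (open scoped MatrixOrder in (CFC.sqrt_nonneg A).posSemidef)
  have hBsym : Bᵀ = B := hBps.1
  have hBe : ∀ p q : Fin d, B q p = B p q := fun p q => congrFun (congrFun hBsym p) q
  have hBB : B * B = A := (open scoped MatrixOrder in CFC.sqrt_mul_sqrt_self A hA.nonneg)
  set a : Fin d → Fin d → ℝ := fun i => B i with ha
  have hpt : ∀ y : Fin d → ℝ, y ⬝ᵥ A.mulVec y = ∑ i, (y ⬝ᵥ a i) ^ 2 := by
    intro y
    have hvm : y ᵥ* B = B *ᵥ y := by rw [← Matrix.vecMul_transpose, hBsym]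
    rw [← hBB, ← Matrix.mulVec_mulVec, Matrix.dotProduct_mulVec, hvm]
    simp only [dotProduct, Matrix.mulVec, ha]
    refine Finset.sum_congr rfl fun i _ => ?_
    have hcomm : ∑ j, B i j * y j = ∑ j, y j * B i j :=
      Finset.sum_congr rfl fun j _ => mul_comm _ _
    rw [sq, hcomm]
  have htr : (H * A).trace = ∑ i, a i ⬝ᵥ H.mulVec (a i) := by
    rw [← hBB, ← mul_assoc, Matrix.trace_mul_comm]
    simp only [Matrix.trace, Matrix.diag, Matrix.mul_apply, dotProduct,
      Matrix.mulVec, ha]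
    refine Finset.sum_congr rfl fun i _ => Finset.sum_congr rfl fun k _ => ?_
    congr 1
    exact Finset.sum_congr rfl fun l _ => by rw [hBe i l]
  have hsplit : ∫ ω, (x ω ⬝ᵥ A.mulVec (x ω)) * (x ω ⬝ᵥ u) ^ 2 ∂μ
      = ∑ i, ∫ ω, (x ω ⬝ᵥ a i) ^ 2 * (x ω ⬝ᵥ u) ^ 2 ∂μ := by
    rw [← integral_finset_sum _ (fun i _ => hint (a i) u)]
    refine integral_congr_ae (Filter.Eventually.of_forall fun ω => ?_)
    show (x ω ⬝ᵥ A.mulVec (x ω)) * (x ω ⬝ᵥ u) ^ 2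
      = ∑ i, (x ω ⬝ᵥ a i) ^ 2 * (x ω ⬝ᵥ u) ^ 2
    rw [hpt (x ω), Finset.sum_mul]
  rw [hsplit, htr]
  have hterm : ∀ i : Fin d, ∫ ω, (x ω ⬝ᵥ a i) ^ 2 * (x ω ⬝ᵥ u) ^ 2 ∂μ
      ≤ α * (a i ⬝ᵥ H.mulVec (a i)) * (u ⬝ᵥ H.mulVec u) := by
    intro i
    set c := ∫ ω, (x ω ⬝ᵥ a i) ^ 2 * (x ω ⬝ᵥ u) ^ 2 ∂μ with hc
    have hcnn : 0 ≤ c := integral_nonneg fun ω => by positivity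
    have hIa : Integrable (fun ω => ((x ω ⬝ᵥ a i) ^ 2) ^ 2) μ := by
      have := hint4 (a i)
      have h : (fun ω => (x ω ⬝ᵥ a i) ^ 4) = fun ω => ((x ω ⬝ᵥ a i) ^ 2) ^ 2 := by
        funext ω; ring
      rwa [h] at this
    have hIu : Integrable (fun ω => ((x ω ⬝ᵥ u) ^ 2) ^ 2) μ := by
      have := hint4 u
      have h : (fun ω => (x ω ⬝ᵥ u) ^ 4) = fun ω => ((x ω ⬝ᵥ u) ^ 2) ^ 2 := by
        funext ω; ring
      rwa [h] at this
    have hcs : c ^ 2 ≤ (∫ ω, (x ω ⬝ᵥ a i) ^ 4 ∂μ) * ∫ ω, (x ω ⬝ᵥ u) ^ 4 ∂μ := by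
      have h := integral_cs μ (fun ω => (x ω ⬝ᵥ a i) ^ 2) (fun ω => (x ω ⬝ᵥ u) ^ 2)
        hIa hIu (hint (a i) u)
      have e1 : ∫ ω, ((x ω ⬝ᵥ a i) ^ 2) ^ 2 ∂μ = ∫ ω, (x ω ⬝ᵥ a i) ^ 4 ∂μ := by
        refine integral_congr_ae (Filter.Eventually.of_forall fun ω => ?_)
        show ((x ω ⬝ᵥ a i) ^ 2) ^ 2 = (x ω ⬝ᵥ a i) ^ 4; ring
      have e2 : ∫ ω, ((x ω ⬝ᵥ u) ^ 2) ^ 2 ∂μ = ∫ ω, (x ω ⬝ᵥ u) ^ 4 ∂μ := by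
        refine integral_congr_ae (Filter.Eventually.of_forall fun ω => ?_)
        show ((x ω ⬝ᵥ u) ^ 2) ^ 2 = (x ω ⬝ᵥ u) ^ 4; ring
      rwa [e1, e2] at h
    have hb : c ^ 2 ≤ (α * (a i ⬝ᵥ H.mulVec (a i)) * (u ⬝ᵥ H.mulVec u)) ^ 2 := by
      have h1 := hkurt (a i)
      have h2 := hkurt u
      have hmul := mul_le_mul h1 h2 (h4nn u) (mul_nonneg hα (sq_nonneg _))
      calc c ^ 2 ≤ (∫ ω, (x ω ⬝ᵥ a i) ^ 4 ∂μ) * ∫ ω, (x ω ⬝ᵥ u) ^ 4 ∂μ := hcs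
        _ ≤ (α * (a i ⬝ᵥ H.mulVec (a i)) ^ 2) * (α * (u ⬝ᵥ H.mulVec u) ^ 2) := hmul
        _ = (α * (a i ⬝ᵥ H.mulVec (a i)) * (u ⬝ᵥ H.mulVec u)) ^ 2 := by ring
    have hrhsnn : 0 ≤ α * (a i ⬝ᵥ H.mulVec (a i)) * (u ⬝ᵥ H.mulVec u) :=
      mul_nonneg (mul_nonneg hα (hq (a i))) (hq u)
    nlinarith [hb, hcnn, hrhsnn]
  calc ∑ i, ∫ ω, (x ω ⬝ᵥ a i) ^ 2 * (x ω ⬝ᵥ u) ^ 2 ∂μ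
      ≤ ∑ i, α * (a i ⬝ᵥ H.mulVec (a i)) * (u ⬝ᵥ H.mulVec u) :=
        Finset.sum_le_sum fun i _ => hterm i
    _ = α * (∑ i, a i ⬝ᵥ H.mulVec (a i)) * (u ⬝ᵥ H.mulVec u) := by
        rw [Finset.mul_sum, Finset.sum_mul]
end
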